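/- Let G = (V, E, w) be an edge-weighted graph, let ε be a real with 0 < ε ≤ 1/100, and set κ = 1/(3(1+ε)). Let ρ = ⟨v_1, …, v_k⟩ be a walk in G, let f be an edge of G, and suppose f is κ-hanging at (p_1, q_1), (p_2, q_2), …, (p_l, q_l) on ρ with l ≥ 21, where for each i the position of p_i on ρ precedes that of q_i, and the position of q_i is no later than that of p_{i+1} (so the subwalks ρ[p_i, q_i] are edge-disjoint segments of ρ occurring in order). Then w(ρ[p_1, q_l]) − dist_G(p_1, q_l) ≥ (1/5)·w(ρ[p_1, q_l]); in particular dist_G(p_1, q_l) ≤ (4/5)·w(ρ[p_1, q_l]). -/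

import Mathlib

open scoped BigOperators

namespace Paper

variable {V : Type*}

/-- The weight of a walk: the sum of its edge weights, with multiplicity. -/
noncomputable def wWalk (w : V → V → ℝ) {G : SimpleGraph V} {u v : V} (p : G.Walk u v) : ℝ :=
  (p.darts.map fun d => w d.toProd.1 d.toProd.2).sum

/-- The distance between two vertices: the infimum of the weights of walks
between them, `⊤` if there is none. -/
noncomputable def gdist (G : SimpleGraph V) (w : V → V → ℝ) (u v : V) : EReal :=
  ⨅ p : G.Walk u v, (wWalk w p : EReal)

lemma wWalk_append (w : V → V → ℝ) {G : SimpleGraph V} {u v x : V}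
    (p : G.Walk u v) (q : G.Walk v x) :
    wWalk w (p.append q) = wWalk w p + wWalk w q := by
  simp [wWalk, SimpleGraph.Walk.darts_append]

lemma wWalk_cons (w : V → V → ℝ) {G : SimpleGraph V} {u v x : V}
    (h : G.Adj u v) (p : G.Walk v x) :
    wWalk w (SimpleGraph.Walk.cons h p) = w u v + wWalk w p := by
  simp [wWalk]

lemma wWalk_nonneg {w : V → V → ℝ} {G : SimpleGraph V}
    (hpos : ∀ u v : V, G.Adj u v → 0 < w u v) {u v : V} (p : G.Walk u v) :
    0 ≤ wWalk w p := by
  apply List.sum_nonneg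
  intro x hx
  simp only [List.mem_map] at hx
  obtain ⟨d, hd, rfl⟩ := hx
  exact (hpos _ _ d.adj).le

lemma wWalk_reverse (w : V → V → ℝ) (hw : ∀ a b, w a b = w b a)
    {G : SimpleGraph V} {u v : V} (p : G.Walk u v) :
    wWalk w p.reverse = wWalk w p := by
  unfold wWalk
  rw [SimpleGraph.Walk.darts_reverse, List.map_reverse, List.sum_reverse, List.map_map]
  refine congrArg List.sum ?_
  refine List.map_congr_left (fun d _ => ?_)
  show w d.symm.toProd.1 d.symm.toProd.2 = _
  rw [SimpleGraph.Dart.symm_toProd]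
  exact hw _ _

lemma gdist_nonneg {G : SimpleGraph V} {w : V → V → ℝ}
    (hpos : ∀ u v : V, G.Adj u v → 0 < w u v) (u v : V) :
    (0 : EReal) ≤ gdist G w u v :=
  le_iInf fun p => by exact_mod_cast wWalk_nonneg hpos p

lemma gdist_le {G : SimpleGraph V} (w : V → V → ℝ) {u v : V} (p : G.Walk u v) :
    gdist G w u v ≤ (wWalk w p : EReal) := iInf_le _ p

/-- `H` is a `t`-spanner of `G` with respect to the weights `w`. -/
def IsSpanner (G : SimpleGraph V) (w : V → V → ℝ) (H : SimpleGraph V) (t : ℝ) : Prop :=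
  H ≤ G ∧ ∀ u v : V, gdist H w u v ≤ (t : EReal) * gdist G w u v

/-- The total weight of the edges of a graph. -/
noncomputable def wGraph (G : SimpleGraph V) (w : V → V → ℝ)
    (hw : ∀ a b, w a b = w b a) : ℝ :=
  ∑ᶠ e ∈ G.edgeSet, Sym2.lift ⟨w, hw⟩ e

/-- if an edge `f = (f₁,f₂)` is `κ`-hanging (with `κ = 1/(3(1+ε))`) at
`l ≥ 21` positions `(p i, q i)` on a walk `ρ`, whose hanging subwalks `σ i` occur in
order as edge-disjoint segments of `ρ` (expressed by the prefix walks `A i` and the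
chaining condition), then the segment `M = ρ[p 0, q (l-1)]` of `ρ` satisfies
`w(M) - dist_G(p 0, q (l-1)) ≥ (1/5)·w(M)`; in particular
`dist_G(p 0, q (l-1)) ≤ (4/5)·w(M)`. -/
theorem statement7 (G : SimpleGraph V) (w : V → V → ℝ)
    (hw : ∀ a b, w a b = w b a) (hpos : ∀ u v : V, G.Adj u v → 0 < w u v)
    (ε : ℝ) (hε0 : 0 < ε) (hε : ε ≤ 1/100)
    {s t f₁ f₂ : V} (hf : G.Adj f₁ f₂) (ρ : G.Walk s t)
    (l : ℕ) (hl : 21 ≤ l) (p q : Fin l → V)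
    (σ : ∀ i : Fin l, G.Walk (p i) (q i))
    (A : ∀ i : Fin l, G.Walk s (p i)) (B : ∀ i : Fin l, G.Walk (q i) t)
    (hdecomp : ∀ i : Fin l, ρ = (A i).append ((σ i).append (B i)))
    (hchain : ∀ (i : Fin l) (h : i.val + 1 < l),
      ∃ C : G.Walk (q i) (p ⟨i.val + 1, h⟩),
        A ⟨i.val + 1, h⟩ = (A i).append ((σ i).append C))
    (hhang : ∀ i : Fin l,
      (1 / (3 * (1 + ε))) * w f₁ f₂ ≤ wWalk w (σ i) ∧
      gdist G w f₁ (p i) + (wWalk w (σ i) : EReal) + gdist G w (q i) f₂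
        ≤ (((1 + ε) * w f₁ f₂ : ℝ) : EReal))
    (M : G.Walk (p ⟨0, by omega⟩) (q ⟨l - 1, by omega⟩))
    (hM : ρ = (A ⟨0, by omega⟩).append (M.append (B ⟨l - 1, by omega⟩))) :
    (((1/5) * wWalk w M : ℝ) : EReal) + gdist G w (p ⟨0, by omega⟩) (q ⟨l - 1, by omega⟩)
        ≤ ((wWalk w M : ℝ) : EReal) ∧
    gdist G w (p ⟨0, by omega⟩) (q ⟨l - 1, by omega⟩) ≤ (((4/5) * wWalk w M : ℝ) : EReal) := by
  classical
  have hwf : 0 < w f₁ f₂ := hpos _ _ hf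
  have h1ε : (0:ℝ) < 1 + ε := by linarith
  have hl1 : l - 1 < l := by omega
  set wσ : ℕ → ℝ := fun i => if h : i < l then wWalk w (σ ⟨i, h⟩) else 0 with hwσ
  -- chain bound on prefix weights
  have hA : ∀ j (h : j < l),
      wWalk w (A ⟨0, by omega⟩) + ∑ i ∈ Finset.range j, wσ i ≤ wWalk w (A ⟨j, h⟩) := by
    intro j
    induction j with
    | zero => intro h; simp
    | succ j ih =>
      intro h
      have h' : j < l := by omega
      obtain ⟨C, hC⟩ := hchain ⟨j, h'⟩ h
      rw [hC, wWalk_append, wWalk_append, Finset.sum_range_succ]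
      have hσj : wσ j = wWalk w (σ ⟨j, h'⟩) := dif_pos h'
      have hih := ih h'
      have hC0 := wWalk_nonneg hpos C
      rw [hσj]
      linarith
  -- M contains all the σ's
  have hρeq : (A ⟨0, by omega⟩).append (M.append (B ⟨l-1, by omega⟩))
      = (A ⟨l-1, hl1⟩).append ((σ ⟨l-1, hl1⟩).append (B ⟨l-1, hl1⟩)) :=
    hM.symm.trans (hdecomp ⟨l-1, hl1⟩)
  have hweq := congrArg (wWalk w) hρeq
  rw [wWalk_append, wWalk_append, wWalk_append, wWalk_append] at hweq
  have hMsum : ∑ i ∈ Finset.range l, wσ i ≤ wWalk w M := by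
    have h1 := hA (l-1) hl1
    have hsum := Finset.sum_range_succ wσ (l-1)
    have hll : l - 1 + 1 = l := by omega
    rw [hll] at hsum
    have hσl1 : wσ (l-1) = wWalk w (σ ⟨l-1, hl1⟩) := dif_pos hl1
    rw [hsum, hσl1]
    linarith
  have hterm : ∀ i ∈ Finset.range l, (1/(3*(1+ε))) * w f₁ f₂ ≤ wσ i := by
    intro i hi
    rw [Finset.mem_range] at hi
    have : wσ i = wWalk w (σ ⟨i, hi⟩) := dif_pos hi
    rw [this]
    exact (hhang ⟨i, hi⟩).1
  have hMlb : (l:ℝ) * ((1/(3*(1+ε))) * w f₁ f₂) ≤ wWalk w M := by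
    calc (l:ℝ) * ((1/(3*(1+ε))) * w f₁ f₂)
        = (Finset.range l).card • ((1/(3*(1+ε))) * w f₁ f₂) := by
          simp [nsmul_eq_mul]
      _ ≤ ∑ i ∈ Finset.range l, wσ i := Finset.card_nsmul_le_sum _ _ _ hterm
      _ ≤ wWalk w M := hMsum
  have hκpos : 0 < (1/(3*(1+ε))) * w f₁ f₂ := by positivity
  have h21 : 21 * ((1/(3*(1+ε))) * w f₁ f₂) ≤ wWalk w M := by
    refine le_trans ?_ hMlb
    have : (21:ℝ) ≤ (l:ℝ) := by exact_mod_cast hl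
    nlinarith
  -- distance bounds near both ends
  obtain ⟨hσ0, hh0⟩ := hhang ⟨0, by omega⟩
  obtain ⟨hσl, hhl⟩ := hhang ⟨l-1, hl1⟩
  set d1 := gdist G w f₁ (p ⟨0, by omega⟩) with hd1def
  set d2 := gdist G w (q ⟨l-1, hl1⟩) f₂ with hd2def
  have hb1 : d1 ≤ (((1+ε) * w f₁ f₂ : ℝ) : EReal) := by
    refine le_trans ?_ hh0
    have h2 : (0:EReal) ≤ ((wWalk w (σ ⟨0, by omega⟩) : ℝ) : EReal) := by
      exact_mod_cast wWalk_nonneg hpos _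
    have h3 := gdist_nonneg hpos (q ⟨0, by omega⟩) f₂
    calc d1 = d1 + 0 + 0 := by simp
      _ ≤ _ := add_le_add (add_le_add le_rfl h2) h3
  have hb2 : d2 ≤ (((1+ε) * w f₁ f₂ : ℝ) : EReal) := by
    refine le_trans ?_ hhl
    have h2 : (0:EReal) ≤ ((wWalk w (σ ⟨l-1, hl1⟩) : ℝ) : EReal) := by
      exact_mod_cast wWalk_nonneg hpos _
    have h3 := gdist_nonneg hpos f₁ (p ⟨l-1, hl1⟩)
    calc d2 = 0 + 0 + d2 := by simp
      _ ≤ _ := add_le_add (add_le_add h3 h2) le_rfl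
  have hd1nn : (0:EReal) ≤ d1 := gdist_nonneg hpos _ _
  have hd2nn : (0:EReal) ≤ d2 := gdist_nonneg hpos _ _
  have hd1t : d1 ≠ ⊤ := ne_top_of_le_ne_top (EReal.coe_ne_top _) hb1
  have hd2t : d2 ≠ ⊤ := ne_top_of_le_ne_top (EReal.coe_ne_top _) hb2
  have hd1b : d1 ≠ ⊥ := by
    intro hb; rw [hb] at hd1nn; exact absurd hd1nn (by simp)
  have hd2b : d2 ≠ ⊥ := by
    intro hb; rw [hb] at hd2nn; exact absurd hd2nn (by simp)
  set r1 := d1.toReal with hr1def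
  set r2 := d2.toReal with hr2def
  have hr1 : d1 = (r1 : EReal) := (EReal.coe_toReal hd1t hd1b).symm
  have hr2 : d2 = (r2 : EReal) := (EReal.coe_toReal hd2t hd2b).symm
  have hr1b : r1 ≤ (1+ε) * w f₁ f₂ := by
    rw [hr1] at hb1; exact_mod_cast hb1
  have hr2b : r2 ≤ (1+ε) * w f₁ f₂ := by
    rw [hr2] at hb2; exact_mod_cast hb2
  -- the shortcut through f
  have key : gdist G w (p ⟨0, by omega⟩) (q ⟨l-1, hl1⟩)
      ≤ ((r1 + w f₁ f₂ + r2 : ℝ) : EReal) := by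
    refine le_of_forall_gt_imp_ge_of_dense fun b hb => ?_
    rcases eq_or_ne b ⊤ with rfl | hbt
    · exact le_top
    have hbb : b ≠ ⊥ := by
      intro h; rw [h] at hb; exact absurd hb (by simp)
    obtain ⟨c', rfl⟩ : ∃ c' : ℝ, b = (c' : EReal) :=
      ⟨b.toReal, (EReal.coe_toReal hbt hbb).symm⟩
    rw [EReal.coe_lt_coe_iff] at hb
    set δ := c' - (r1 + w f₁ f₂ + r2) with hδdef
    have hδ : 0 < δ := by simp [hδdef]; linarith
    have h1 : d1 < ((r1 + δ/2 : ℝ) : EReal) := by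
      rw [hr1]; exact_mod_cast (by linarith : r1 < r1 + δ/2)
    have h2 : d2 < ((r2 + δ/2 : ℝ) : EReal) := by
      rw [hr2]; exact_mod_cast (by linarith : r2 < r2 + δ/2)
    rw [hd1def, gdist] at h1
    rw [hd2def, gdist] at h2
    obtain ⟨P, hP⟩ := iInf_lt_iff.mp h1
    obtain ⟨Q, hQ⟩ := iInf_lt_iff.mp h2
    have hP' : wWalk w P < r1 + δ/2 := by exact_mod_cast hP
    have hQ' : wWalk w Q < r2 + δ/2 := by exact_mod_cast hQ
    set R := P.reverse.append ((SimpleGraph.Walk.cons hf SimpleGraph.Walk.nil).append Q.reverse)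
      with hRdef
    have hwR : wWalk w R = wWalk w P + (w f₁ f₂ + wWalk w Q) := by
      rw [hRdef, wWalk_append, wWalk_append, wWalk_reverse w hw, wWalk_reverse w hw,
        wWalk_cons]
      simp [wWalk]
    refine le_trans (gdist_le w R) ?_
    rw [hwR]
    exact_mod_cast (by linarith : wWalk w P + (w f₁ f₂ + wWalk w Q) ≤ c')
  -- numeric conclusion
  have hrc : r1 + w f₁ f₂ + r2 ≤ (4/5) * wWalk w M := by
    have heq : (1+ε) * (21 * ((1/(3*(1+ε))) * w f₁ f₂)) = 7 * w f₁ f₂ := by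
      field_simp; ring
    have h7 : 7 * w f₁ f₂ ≤ (1+ε) * wWalk w M := by
      rw [← heq]; exact mul_le_mul_of_nonneg_left h21 h1ε.le
    nlinarith [h7, hr1b, hr2b, hwf, hε, hε0]
  have key2 : gdist G w (p ⟨0, by omega⟩) (q ⟨l-1, hl1⟩)
      ≤ (((4/5) * wWalk w M : ℝ) : EReal) :=
    key.trans (EReal.coe_le_coe_iff.mpr hrc)
  constructor
  · calc (((1/5) * wWalk w M : ℝ) : EReal) + gdist G w (p ⟨0, by omega⟩) (q ⟨l-1, hl1⟩)
        ≤ (((1/5) * wWalk w M : ℝ) : EReal) + (((4/5) * wWalk w M : ℝ) : EReal) :=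
          add_le_add_right key2 _
      _ = ((wWalk w M : ℝ) : EReal) := by
          rw [← EReal.coe_add]; congr 1; ring
  · exact key2

end Paper
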